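/- Let $L$ be a field, and let $V$ be a three-dimensional filtered $\varphi$-module over $L$: a 3-dimensional $L$-vector space with an endomorphism $\varphi$ having three distinct eigenvalues $\phi, \phi', \phi'' \in L^\times$, and a filtration with three distinct jumps $k_1 < k_2 < k_3$, satisfying weak admissibility (for every $\varphi$-stable subspace $W$, $v(\det \varphi|_W) \ge \sum \text{(jumps of the induced filtration on } W)$, with equality for $W = V$, where $v$ is a fixed valuation with $v(p)=1$ and the jumps are the Hodge numbers). Assume $V$ is not the direct sum of a weakly admissible line and a weakly admissible plane. If the eigenline $L_\phi = V^{\varphi = \phi}$ is critical (i.e. $L_\phi \subset \mathrm{Fil}^{k_2} V$), then: (a) $L_\phi \ne \mathrm{Fil}^{k_3} V$; (b) no eigenline $L_{\phi'}$ with $\phi' \ne \phi$ is critical; (c) no $\varphi$-stable plane $P \subset V$ is critical (i.e. no such $P$ contains $\mathrm{Fil}^{k_3} V$). -/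

import Mathlib

open Module

/-- The Hodge number `t_H(W)` of a subspace `W` of a filtered vector space: the sum of
the jumps (with multiplicity) of the induced filtration, all jumps lying in `[a, b]`. -/
noncomputable def tHodge {K V : Type*} [Field K] [AddCommGroup V] [Module K V]
    (Fil : ℤ → Submodule K V) (a b : ℤ) (W : Submodule K V) : ℤ :=
  ∑ m ∈ Finset.Icc a b,
    m * ((Module.finrank K ↥(W ⊓ Fil m) : ℤ) - (Module.finrank K ↥(W ⊓ Fil (m + 1)) : ℤ))

lemma tH_eq {K V : Type*} [Field K] [AddCommGroup V] [Module K V]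
    (kk : Fin 3 → ℤ) (hk01 : kk 0 < kk 1) (hk12 : kk 1 < kk 2)
    (Fil : ℤ → Submodule K V)
    (h0 : ∀ m : ℤ, m ≤ kk 0 → Fil m = ⊤)
    (h1 : ∀ m : ℤ, kk 0 < m → m ≤ kk 1 → Fil m = Fil (kk 1))
    (h2 : ∀ m : ℤ, kk 1 < m → m ≤ kk 2 → Fil m = Fil (kk 2))
    (h3 : ∀ m : ℤ, kk 2 < m → Fil m = ⊥)
    (W : Submodule K V) :
    tHodge Fil (kk 0) (kk 2) W =
      kk 0 * ((finrank K W : ℤ) - (finrank K ↥(W ⊓ Fil (kk 1)) : ℤ))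
      + kk 1 * ((finrank K ↥(W ⊓ Fil (kk 1)) : ℤ) - (finrank K ↥(W ⊓ Fil (kk 2)) : ℤ))
      + kk 2 * (finrank K ↥(W ⊓ Fil (kk 2)) : ℤ) := by
  have hsub : ({kk 0, kk 1, kk 2} : Finset ℤ) ⊆ Finset.Icc (kk 0) (kk 2) := by
    intro m hm
    simp only [Finset.mem_insert, Finset.mem_singleton] at hm
    rw [Finset.mem_Icc]
    rcases hm with h | h | h <;> omega
  have hzero : ∀ m ∈ Finset.Icc (kk 0) (kk 2), m ∉ ({kk 0, kk 1, kk 2} : Finset ℤ) →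
      m * ((finrank K ↥(W ⊓ Fil m) : ℤ) - (finrank K ↥(W ⊓ Fil (m + 1)) : ℤ)) = 0 := by
    intro m hm hnm
    rw [Finset.mem_Icc] at hm
    simp only [Finset.mem_insert, Finset.mem_singleton, not_or] at hnm
    have heq : Fil m = Fil (m + 1) := by
      rcases lt_or_ge m (kk 1) with h | h
      · rw [h1 m (by omega) (by omega), h1 (m+1) (by omega) (by omega)]
      · rw [h2 m (by omega) (by omega), h2 (m+1) (by omega) (by omega)]
    rw [heq]
    ring
  have hne01 : kk 0 ≠ kk 1 := by omega
  have hne02 : kk 0 ≠ kk 2 := by omega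
  have hne12 : kk 1 ≠ kk 2 := by omega
  rw [tHodge, ← Finset.sum_subset hsub hzero]
  rw [Finset.sum_insert (by simp [hne01, hne02]), Finset.sum_insert (by simp [hne12]),
    Finset.sum_singleton]
  have e0 : W ⊓ Fil (kk 0) = W := by rw [h0 (kk 0) le_rfl, inf_top_eq]
  have e1 : W ⊓ Fil (kk 0 + 1) = W ⊓ Fil (kk 1) := by rw [h1 (kk 0 + 1) (by omega) (by omega)]
  have e2 : W ⊓ Fil (kk 1 + 1) = W ⊓ Fil (kk 2) := by rw [h2 (kk 1 + 1) (by omega) (by omega)]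
  have e3 : W ⊓ Fil (kk 2 + 1) = ⊥ := by rw [h3 (kk 2 + 1) (by omega), inf_bot_eq]
  rw [e0, e1, e2, e3, finrank_bot]
  push_cast
  ring

/-- A line meeting a subspace it is not contained in meets it trivially. -/
lemma line_inf_rank_zero {K V : Type*} [Field K] [AddCommGroup V] [Module K V]
    [FiniteDimensional K V] {x : V} (hx : x ≠ 0) {q : Submodule K V}
    (h : ¬ Submodule.span K {x} ≤ q) :
    finrank K ↥(Submodule.span K {x} ⊓ q) = 0 := by
  have hlt : Submodule.span K {x} ⊓ q < Submodule.span K {x} := by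
    refine lt_of_le_of_ne inf_le_left fun he => h ?_
    rw [← he]; exact inf_le_right
  have := Submodule.finrank_lt_finrank_of_lt hlt
  rw [finrank_span_singleton hx] at this
  omega

theorem stmt_13 {K V : Type*} [Field K] [AddCommGroup V] [Module K V]
    (b : Basis (Fin 3) K V)
    (μ : Fin 3 → K) (hμinj : Function.Injective μ) (hμ0 : ∀ i, μ i ≠ 0)
    (φ : Module.End K V) (hφ : ∀ i, φ (b i) = μ i • b i)
    (kk : Fin 3 → ℤ) (hk01 : kk 0 < kk 1) (hk12 : kk 1 < kk 2)
    (Fil : ℤ → Submodule K V) (hanti : Antitone Fil)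
    (h0 : ∀ m : ℤ, m ≤ kk 0 → Fil m = ⊤)
    (h1 : ∀ m : ℤ, kk 0 < m → m ≤ kk 1 → Fil m = Fil (kk 1))
    (h2 : ∀ m : ℤ, kk 1 < m → m ≤ kk 2 → Fil m = Fil (kk 2))
    (h3 : ∀ m : ℤ, kk 2 < m → Fil m = ⊥)
    (hd1 : Module.finrank K ↥(Fil (kk 1)) = 2)
    (hd2 : Module.finrank K ↥(Fil (kk 2)) = 1)
    (v : Fin 3 → ℤ)
    (hwa : ∀ S : Finset (Fin 3),
      tHodge Fil (kk 0) (kk 2) (⨆ i ∈ S, Submodule.span K {b i}) ≤ ∑ i ∈ S, v i)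
    (hwaeq : tHodge Fil (kk 0) (kk 2) ⊤ = ∑ i : Fin 3, v i)
    (hindec : ¬ ∃ i : Fin 3,
      tHodge Fil (kk 0) (kk 2) (Submodule.span K {b i}) = v i ∧
      tHodge Fil (kk 0) (kk 2) (⨆ j ∈ Finset.univ.erase i, Submodule.span K {b j}) =
        ∑ j ∈ Finset.univ.erase i, v j)
    (i0 : Fin 3) (hcrit : Submodule.span K {b i0} ≤ Fil (kk 1)) :
    (Submodule.span K {b i0} ≠ Fil (kk 2)) ∧
    (∀ i : Fin 3, i ≠ i0 → ¬ Submodule.span K {b i} ≤ Fil (kk 1)) ∧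
    (∀ S : Finset (Fin 3), S.card = 2 →
      ¬ Fil (kk 2) ≤ ⨆ i ∈ S, Submodule.span K {b i}) := by
  haveI : FiniteDimensional K V := Module.Finite.of_basis b
  have hrV : finrank K V = 3 := by rw [finrank_eq_card_basis b]; simp
  have hk12' : Fil (kk 2) ≤ Fil (kk 1) := hanti hk12.le
  have tH := tH_eq kk hk01 hk12 Fil h0 h1 h2 h3
  -- total sum of valuations
  have hv : (∑ j : Fin 3, v j) = kk 0 + kk 1 + kk 2 := by
    rw [← hwaeq, tH ⊤, top_inf_eq, top_inf_eq, finrank_top, hrV, hd1, hd2]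
    push_cast; ring
  -- line ranks
  have hrl : ∀ i : Fin 3, finrank K ↥(Submodule.span K {b i}) = 1 :=
    fun i => finrank_span_singleton (b.ne_zero i)
  -- b i not in the span of the two other basis vectors
  have hnm : ∀ i j k : Fin 3, i ≠ j → i ≠ k →
      b i ∉ Submodule.span K {b j} ⊔ Submodule.span K {b k} := by
    intro i j k hij hik hmem
    rw [← Submodule.span_insert] at hmem
    have himg : (insert (b j) {b k} : Set V) = b '' {j, k} := by
      rw [Set.image_insert_eq, Set.image_singleton]
    rw [himg] at hmem
    exact b.linearIndependent.notMem_span_image (by simp [hij, hik]) hmem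
  -- planes spanned by two distinct basis vectors have rank 2
  have hrp : ∀ j k : Fin 3, j ≠ k →
      finrank K ↥(Submodule.span K {b j} ⊔ Submodule.span K {b k}) = 2 := by
    intro j k hjk
    have hdisj : Submodule.span K {b j} ⊓ Submodule.span K {b k} = ⊥ := by
      by_contra hne
      have hlt : ⊥ < Submodule.span K {b j} ⊓ Submodule.span K {b k} :=
        bot_lt_iff_ne_bot.mpr hne
      have h1' : finrank K ↥(Submodule.span K {b j} ⊓ Submodule.span K {b k}) ≤ 1 := by
        have := Submodule.finrank_mono (inf_le_left :
          Submodule.span K {b j} ⊓ Submodule.span K {b k} ≤ Submodule.span K {b j})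
        rwa [hrl j] at this
      have h2' : 0 < finrank K ↥(Submodule.span K {b j} ⊓ Submodule.span K {b k}) := by
        have := Submodule.finrank_lt_finrank_of_lt hlt
        simpa [finrank_bot] using this
      -- so the inf is the whole line span {b j}, hence b j ∈ span {b k}
      have heq : Submodule.span K {b j} ⊓ Submodule.span K {b k} = Submodule.span K {b j} :=
        Submodule.eq_of_le_of_finrank_le inf_le_left (by rw [hrl j]; omega)
      have : Submodule.span K {b j} ≤ Submodule.span K {b k} := by
        rw [← heq]; exact inf_le_right
      have hb : b j ∈ Submodule.span K {b k} :=
        this (Submodule.mem_span_singleton_self _)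
      have : b j ∈ Submodule.span K (b '' {k}) := by
        rwa [Set.image_singleton]
      exact b.linearIndependent.notMem_span_image (by simp [hjk]) this
    have := Submodule.finrank_sup_add_finrank_inf_eq
      (Submodule.span K {b j}) (Submodule.span K {b k})
    rw [hdisj, finrank_bot, hrl j, hrl k] at this
    omega
  -- the key contradiction: if tH(line i) + tH(complementary plane) = k0+k1+k2, contradiction
  have key : ∀ i : Fin 3,
      tHodge Fil (kk 0) (kk 2) (Submodule.span K {b i}) +
        tHodge Fil (kk 0) (kk 2) (⨆ j ∈ Finset.univ.erase i, Submodule.span K {b j}) =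
        kk 0 + kk 1 + kk 2 → False := by
    intro i hsum
    have hl := hwa {i}
    simp only [Finset.iSup_singleton, Finset.sum_singleton] at hl
    have hp := hwa (Finset.univ.erase i)
    have hse : (∑ j ∈ Finset.univ.erase i, v j) + v i = ∑ j : Fin 3, v j :=
      Finset.sum_erase_add _ _ (Finset.mem_univ i)
    exact hindec ⟨i, by omega, by omega⟩
  -- index utilities
  have hexk : ∀ i j : Fin 3, ∃ k : Fin 3, k ≠ i ∧ k ≠ j := by decide
  have herase : ∀ i j k : Fin 3, i ≠ j → i ≠ k → j ≠ k →
      Finset.univ.erase i = {j, k} := by decide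
  have hsup_pair : ∀ j k : Fin 3,
      (⨆ m ∈ ({j, k} : Finset (Fin 3)), Submodule.span K {b m}) =
      Submodule.span K {b j} ⊔ Submodule.span K {b k} := by
    intro j k
    rw [Finset.iSup_insert, Finset.iSup_singleton]
  -- (a) [in the strong form: no eigenline equals Fil^{k_3}]
  have hA : ∀ i : Fin 3, Submodule.span K {b i} ≠ Fil (kk 2) := by
    intro i heq
    obtain ⟨j, hji, hjunk⟩ := hexk i i
    obtain ⟨k, hki, hkj⟩ := hexk i j
    have hjk : j ≠ k := fun h => hkj h.symm
    set P := Submodule.span K {b j} ⊔ Submodule.span K {b k} with hP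
    have hbiP : b i ∉ P := hnm i j k (fun h => hji h.symm) (fun h => hki h.symm)
    have hlP : ¬ Submodule.span K {b i} ≤ P := fun h =>
      hbiP (h (Submodule.mem_span_singleton_self _))
    -- tH of the line
    have hle2 : Submodule.span K {b i} ≤ Fil (kk 2) := heq.le
    have hle1 : Submodule.span K {b i} ≤ Fil (kk 1) := hle2.trans hk12'
    have hTl : tHodge Fil (kk 0) (kk 2) (Submodule.span K {b i}) = kk 2 := by
      rw [tH, inf_eq_left.2 hle1, inf_eq_left.2 hle2, hrl i]
      push_cast; ring
    -- tH of P
    have hd2P : finrank K ↥(P ⊓ Fil (kk 2)) = 0 := by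
      rw [← heq, inf_comm]
      exact line_inf_rank_zero (b.ne_zero i) hlP
    have hd1Pub : finrank K ↥(P ⊓ Fil (kk 1)) ≤ 2 := by
      have := Submodule.finrank_mono (inf_le_right : P ⊓ Fil (kk 1) ≤ Fil (kk 1))
      rwa [hd1] at this
    have hd1Plb : 1 ≤ finrank K ↥(P ⊓ Fil (kk 1)) := by
      have hs := Submodule.finrank_sup_add_finrank_inf_eq P (Fil (kk 1))
      have hub := Submodule.finrank_le (P ⊔ Fil (kk 1))
      rw [hrp j k hjk, hd1] at hs
      rw [hrV] at hub
      omega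
    have hd1Pne : finrank K ↥(P ⊓ Fil (kk 1)) ≠ 2 := by
      intro h2'
      have hinfP : P ⊓ Fil (kk 1) = P :=
        Submodule.eq_of_le_of_finrank_le inf_le_left (by rw [hrp j k hjk, h2'])
      have hPle : P ≤ Fil (kk 1) := by rw [← hinfP]; exact inf_le_right
      have hPeq : P = Fil (kk 1) :=
        Submodule.eq_of_le_of_finrank_le hPle (by rw [hrp j k hjk, hd1])
      have : Submodule.span K {b i} ≤ P := by
        calc Submodule.span K {b i} = Fil (kk 2) := heq
          _ ≤ Fil (kk 1) := hk12'
          _ = P := hPeq.symm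
      exact hlP this
    have hd1P : finrank K ↥(P ⊓ Fil (kk 1)) = 1 := by omega
    have hTP : tHodge Fil (kk 0) (kk 2) P = kk 0 + kk 1 := by
      rw [tH, hd1P, hd2P, hrp j k hjk]
      push_cast; ring
    refine key i ?_
    rw [herase i j k (fun h => hji h.symm) (fun h => hki h.symm) hjk, hsup_pair, hTl, hTP]
    ring
  refine ⟨hA i0, ?_, ?_⟩
  · -- (b): no other eigenline is critical
    intro i hii0 hle
    set Q := Submodule.span K {b i0} ⊔ Submodule.span K {b i} with hQ
    have hQle : Q ≤ Fil (kk 1) := sup_le hcrit hle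
    have hQeq : Q = Fil (kk 1) :=
      Submodule.eq_of_le_of_finrank_le hQle (by rw [hrp i0 i (fun h => hii0 h.symm), hd1])
    obtain ⟨j, hji0, hji⟩ := hexk i0 i
    have hbjQ : b j ∉ Q := hnm j i0 i hji0 hji
    have hlj1 : ¬ Submodule.span K {b j} ≤ Fil (kk 1) := fun h =>
      hbjQ (hQeq ▸ h (Submodule.mem_span_singleton_self _))
    have hlj2 : ¬ Submodule.span K {b j} ≤ Fil (kk 2) := fun h => hlj1 (h.trans hk12')
    have hTl : tHodge Fil (kk 0) (kk 2) (Submodule.span K {b j}) = kk 0 := by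
      rw [tH, line_inf_rank_zero (b.ne_zero j) hlj1, line_inf_rank_zero (b.ne_zero j) hlj2,
        hrl j]
      push_cast; ring
    have hTP : tHodge Fil (kk 0) (kk 2) Q = kk 1 + kk 2 := by
      rw [tH, hQeq, inf_idem, inf_eq_right.2 hk12', hd1, hd2]
      push_cast; ring
    refine key j ?_
    rw [herase j i0 i hji0 hji hii0.symm, hsup_pair, hTl, hTP]
    ring
  · -- (c): no φ-stable plane is critical
    intro S hS hle
    obtain ⟨j, k, hjk, rfl⟩ := Finset.card_eq_two.mp hS
    rw [hsup_pair] at hle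
    set P := Submodule.span K {b j} ⊔ Submodule.span K {b k} with hP
    have hrP : finrank K ↥P = 2 := hrp j k hjk
    have hd2P : P ⊓ Fil (kk 2) = Fil (kk 2) := inf_eq_right.2 hle
    have hd1Pub : finrank K ↥(P ⊓ Fil (kk 1)) ≤ 2 := by
      have := Submodule.finrank_mono (inf_le_right : P ⊓ Fil (kk 1) ≤ Fil (kk 1))
      rwa [hd1] at this
    have hd1Plb : 1 ≤ finrank K ↥(P ⊓ Fil (kk 1)) := by
      have hs := Submodule.finrank_sup_add_finrank_inf_eq P (Fil (kk 1))
      have hub := Submodule.finrank_le (P ⊔ Fil (kk 1))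
      rw [hrP, hd1] at hs
      rw [hrV] at hub
      omega
    have hPeq_of2 : finrank K ↥(P ⊓ Fil (kk 1)) = 2 → P = Fil (kk 1) := by
      intro h2'
      have hinfP : P ⊓ Fil (kk 1) = P :=
        Submodule.eq_of_le_of_finrank_le inf_le_left (by rw [hrP, h2'])
      have hPle : P ≤ Fil (kk 1) := by rw [← hinfP]; exact inf_le_right
      exact Submodule.eq_of_le_of_finrank_le hPle (by rw [hrP, hd1])
    by_cases hi0S : i0 = j ∨ i0 = k
    · -- i0 ∈ S
      have hbi0P : b i0 ∈ P := by
        rcases hi0S with rfl | rfl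
        · exact Submodule.mem_sup_left (Submodule.mem_span_singleton_self _)
        · exact Submodule.mem_sup_right (Submodule.mem_span_singleton_self _)
      have hLP : Submodule.span K {b i0} ≤ P :=
        (Submodule.span_singleton_le_iff_mem _ _).2 hbi0P
      by_cases h2' : finrank K ↥(P ⊓ Fil (kk 1)) = 2
      · -- P = Fil^{k_2}, the third line is generic
        have hPeq := hPeq_of2 h2'
        obtain ⟨i, hij, hik⟩ := hexk j k
        have hbiP : b i ∉ P := hnm i j k hij hik
        have hli1 : ¬ Submodule.span K {b i} ≤ Fil (kk 1) := fun h =>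
          hbiP (hPeq ▸ h (Submodule.mem_span_singleton_self _))
        have hli2 : ¬ Submodule.span K {b i} ≤ Fil (kk 2) := fun h => hli1 (h.trans hk12')
        have hTl : tHodge Fil (kk 0) (kk 2) (Submodule.span K {b i}) = kk 0 := by
          rw [tH, line_inf_rank_zero (b.ne_zero i) hli1, line_inf_rank_zero (b.ne_zero i) hli2,
            hrl i]
          push_cast; ring
        have hTP : tHodge Fil (kk 0) (kk 2) P = kk 1 + kk 2 := by
          rw [tH, hPeq, inf_idem, inf_eq_right.2 hk12', hd1, hd2]
          push_cast; ring
        refine key i ?_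
        rw [herase i j k hij hik hjk, hsup_pair, hTl, hTP]
        ring
      · -- P ⊓ Fil^{k_2} is a line, equal to both L and Fil^{k_3}
        have hd1P : finrank K ↥(P ⊓ Fil (kk 1)) = 1 := by omega
        have hLinf : Submodule.span K {b i0} ≤ P ⊓ Fil (kk 1) := le_inf hLP hcrit
        have hLeq : Submodule.span K {b i0} = P ⊓ Fil (kk 1) :=
          Submodule.eq_of_le_of_finrank_le hLinf (by rw [hd1P, hrl i0])
        have hFinf : Fil (kk 2) ≤ P ⊓ Fil (kk 1) := le_inf hle hk12'
        have : Fil (kk 2) = Submodule.span K {b i0} := by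
          rw [hLeq]
          exact Submodule.eq_of_le_of_finrank_le hFinf (by rw [hd1P, hd2])
        exact hA i0 this.symm
    · -- i0 ∉ S
      push_neg at hi0S
      obtain ⟨hi0j, hi0k⟩ := hi0S
      have hbi0P : b i0 ∉ P := hnm i0 j k hi0j hi0k
      have hd1P : finrank K ↥(P ⊓ Fil (kk 1)) = 1 := by
        rcases Nat.lt_or_ge (finrank K ↥(P ⊓ Fil (kk 1))) 2 with h | h
        · omega
        · exfalso
          have hPeq := hPeq_of2 (by omega)
          exact hbi0P (hPeq ▸ hcrit (Submodule.mem_span_singleton_self _))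
      have hTP : tHodge Fil (kk 0) (kk 2) P = kk 0 + kk 2 := by
        rw [tH, hd1P, hd2P, hrP, hd2]
        push_cast; ring
      have hli2 : ¬ Submodule.span K {b i0} ≤ Fil (kk 2) := by
        intro h
        exact hA i0 (Submodule.eq_of_le_of_finrank_le h (by rw [hrl i0, hd2]))
      have hTl : tHodge Fil (kk 0) (kk 2) (Submodule.span K {b i0}) = kk 1 := by
        rw [tH, inf_eq_left.2 hcrit, line_inf_rank_zero (b.ne_zero i0) hli2, hrl i0]
        push_cast; ring
      refine key i0 ?_
      rw [herase i0 j k hi0j hi0k hjk, hsup_pair, hTl, hTP]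
      ring
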